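/- Let n ≥ 1 be an integer and let N > 9n be an integer. Set a := 2^(2n) − 2^n + 1 and b := (2^N + 1)·(2^(7n) + 2^(6n) − 2^(4n) − 2^(3n) + 2^n + 1). Then a and b are odd, s(a) = n + 1, s(b) = 2(3n + 2), and s(ab) = 4. -/

import Mathlib

def s (n : ℕ) : ℕ := (Nat.digits 2 n).count 1

lemma s_zero : s 0 = 0 := by simp [s]

lemma s_one : s 1 = 1 := by simp [s]

lemma s_double (m : ℕ) : s (2 * m) = s m := by
  rcases Nat.eq_zero_or_pos m with h | h
  · simp [h]
  · unfold s
    rw [Nat.digits_def' (by norm_num : 1 < 2) (by omega)]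
    have h1 : 2 * m % 2 = 0 := by omega
    have h2 : 2 * m / 2 = m := by omega
    rw [h1, h2]
    simp

lemma s_double_add_one (m : ℕ) : s (2 * m + 1) = s m + 1 := by
  unfold s
  rw [Nat.digits_def' (by norm_num : 1 < 2) (by omega)]
  have h1 : (2 * m + 1) % 2 = 1 := by omega
  have h2 : (2 * m + 1) / 2 = m := by omega
  rw [h1, h2]
  simp

lemma s_shift (k : ℕ) : ∀ v u : ℕ, u < 2 ^ k → s (2 ^ k * v + u) = s v + s u := by
  induction k with
  | zero =>
    intro v u hu
    interval_cases u
    simp [s_zero]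
  | succ k ih =>
    intro v u hu
    have hp : (2:ℕ) ^ (k + 1) = 2 * 2 ^ k := by ring
    rcases Nat.even_or_odd u with ⟨t, ht⟩ | ⟨t, ht⟩
    · have ht' : u = 2 * t := by omega
      have htk : t < 2 ^ k := by omega
      have he : 2 ^ (k + 1) * v + u = 2 * (2 ^ k * v + t) := by rw [ht', hp]; ring
      rw [he, s_double, ih v t htk, ht', s_double]
    · have htk : t < 2 ^ k := by omega
      have he : 2 ^ (k + 1) * v + u = 2 * (2 ^ k * v + t) + 1 := by rw [ht, hp]; ring
      rw [he, s_double_add_one, ih v t htk, ht, s_double_add_one]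
      ring

lemma s_pow (k : ℕ) : s (2 ^ k) = 1 := by
  have := s_shift k 1 0 (Nat.two_pow_pos k)
  simpa [s_zero, s_one] using this

lemma s_pow_sub_one (k : ℕ) : s (2 ^ k - 1) = k := by
  induction k with
  | zero => simp [s_zero]
  | succ k ih =>
    have h1 : (1:ℕ) ≤ 2 ^ k := Nat.one_le_two_pow
    have he : 2 ^ (k + 1) - 1 = 2 * (2 ^ k - 1) + 1 := by
      have : (2:ℕ) ^ (k + 1) = 2 * 2 ^ k := by ring
      omega
    rw [he, s_double_add_one, ih]

lemma s_pow_add_one (k : ℕ) (hk : 0 < k) : s (2 ^ k + 1) = 2 := by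
  have h1 : (1:ℕ) < 2 ^ k := Nat.one_lt_two_pow_iff.mpr (by omega)
  have := s_shift k 1 1 h1
  simpa [s_one] using this

theorem construction_k4 (n N : ℕ) (hn : 1 ≤ n) (hN : 9 * n < N)
    (a b : ℕ)
    (ha : a = 2 ^ (2 * n) - 2 ^ n + 1)
    (hb : b = (2 ^ N + 1) *
      (2 ^ (7 * n) + 2 ^ (6 * n) - 2 ^ (4 * n) - 2 ^ (3 * n) + 2 ^ n + 1)) :
    Odd a ∧ Odd b ∧ s a = n + 1 ∧ s b = 2 * (3 * n + 2) ∧ s (a * b) = 4 := by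
  obtain ⟨m, rfl⟩ : ∃ m, n = m + 1 := ⟨n - 1, by omega⟩
  set q : ℕ := 2 ^ m with hqdef
  have hq1 : 1 ≤ q := Nat.one_le_two_pow
  -- power rewrites
  have hq : (2:ℕ) ^ (m + 1) = 2 * q := by simp only [hqdef, pow_succ]; ring
  have e2 : (2:ℕ) ^ (2 * (m + 1)) = 4 * q ^ 2 := by
    rw [show 2 * (m + 1) = (m + 1) * 2 by ring, pow_mul, hq]; ring
  have e3 : (2:ℕ) ^ (3 * (m + 1)) = 8 * q ^ 3 := by
    rw [show 3 * (m + 1) = (m + 1) * 3 by ring, pow_mul, hq]; ring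
  have e4 : (2:ℕ) ^ (4 * (m + 1)) = 16 * q ^ 4 := by
    rw [show 4 * (m + 1) = (m + 1) * 4 by ring, pow_mul, hq]; ring
  have e6 : (2:ℕ) ^ (6 * (m + 1)) = 64 * q ^ 6 := by
    rw [show 6 * (m + 1) = (m + 1) * 6 by ring, pow_mul, hq]; ring
  have e7 : (2:ℕ) ^ (7 * (m + 1)) = 128 * q ^ 7 := by
    rw [show 7 * (m + 1) = (m + 1) * 7 by ring, pow_mul, hq]; ring
  have e9 : (2:ℕ) ^ (9 * (m + 1)) = 512 * q ^ 9 := by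
    rw [show 9 * (m + 1) = (m + 1) * 9 by ring, pow_mul, hq]; ring
  have e41 : (2:ℕ) ^ (4 * (m + 1) + 1) = 32 * q ^ 4 := by
    rw [pow_succ, e4]; ring
  have e2m1 : (2:ℕ) ^ (2 * m + 1) = 2 * q ^ 2 := by
    rw [show 2 * m + 1 = m * 2 + 1 by ring, pow_succ, pow_mul]
    simp only [hqdef]; ring
  -- monomial comparisons
  have m12 : q ≤ q ^ 2 := Nat.le_self_pow (by norm_num) q
  have m13 : q ≤ q ^ 3 := Nat.le_self_pow (by norm_num) q
  have m14 : q ≤ q ^ 4 := Nat.le_self_pow (by norm_num) q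
  have m19 : q ≤ q ^ 9 := Nat.le_self_pow (by norm_num) q
  have m34 : q ^ 3 ≤ q ^ 4 := Nat.pow_le_pow_right hq1 (by omega)
  have m46 : q ^ 4 ≤ q ^ 6 := Nat.pow_le_pow_right hq1 (by omega)
  have m47 : q ^ 4 ≤ q ^ 7 := Nat.pow_le_pow_right hq1 (by omega)
  have m36 : q ^ 3 ≤ q ^ 6 := Nat.pow_le_pow_right hq1 (by omega)
  have m79 : q ^ 7 ≤ q ^ 9 := Nat.pow_le_pow_right hq1 (by omega)
  have m69 : q ^ 6 ≤ q ^ 9 := Nat.pow_le_pow_right hq1 (by omega)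
  have m49 : q ^ 4 ≤ q ^ 9 := Nat.pow_le_pow_right hq1 (by omega)
  have h1q2 : 1 ≤ q ^ 2 := hq1.trans m12
  have h1q3 : 1 ≤ q ^ 3 := hq1.trans m13
  have h1q4 : 1 ≤ q ^ 4 := hq1.trans m14
  have h1q9 : 1 ≤ q ^ 9 := hq1.trans m19
  -- the cofactor
  set C : ℕ := 2 ^ (7 * (m + 1)) + 2 ^ (6 * (m + 1)) - 2 ^ (4 * (m + 1)) -
      2 ^ (3 * (m + 1)) + 2 ^ (m + 1) + 1 with hCdef
  have c1 : 16 * q ^ 4 ≤ 128 * q ^ 7 + 64 * q ^ 6 := by omega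
  have c2 : 8 * q ^ 3 ≤ 128 * q ^ 7 + 64 * q ^ 6 - 16 * q ^ 4 := by omega
  have c3 : (1:ℕ) ≤ 4 * q ^ 3 + 2 * q ^ 2 := by omega
  have c4 : (1:ℕ) ≤ 2 * q := by omega
  have hcval : C = 32 * q ^ 4 * (4 * q ^ 3 + 2 * q ^ 2 - 1) +
      (8 * q ^ 3 * (2 * q - 1) + (2 * q + 1)) := by
    rw [hCdef, e7, e6, e4, e3, hq]
    zify [c1, c2, c3, c4]
    ring
  -- value of a
  have hq24 : 2 * q ≤ 4 * q ^ 2 := by omega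
  have haval : a = 2 ^ (m + 1) * (2 ^ (m + 1) - 1) + 1 := by
    rw [ha, e2, hq]
    zify [hq24, c4]
    ring
  -- s a
  have h1lt : (1:ℕ) < 2 ^ (m + 1) := Nat.one_lt_two_pow_iff.mpr (by omega)
  have hsa : s a = (m + 1) + 1 := by
    rw [haval, s_shift (m + 1) _ 1 h1lt, s_pow_sub_one, s_one]
  -- s C
  have hB1 : 8 * q ^ 3 * (2 * q - 1) ≤ 16 * q ^ 4 := by
    calc 8 * q ^ 3 * (2 * q - 1) ≤ 8 * q ^ 3 * (2 * q) := by
          exact Nat.mul_le_mul_left _ (by omega)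
      _ = 16 * q ^ 4 := by ring
  have hBlt : 8 * q ^ 3 * (2 * q - 1) + (2 * q + 1) < 2 ^ (4 * (m + 1) + 1) := by
    rw [e41]; omega
  have hAeq : 4 * q ^ 3 + 2 * q ^ 2 - 1 =
      2 ^ (2 * m + 1) * 2 ^ (m + 1) + (2 ^ (2 * m + 1) - 1) := by
    rw [e2m1, hq]
    have : 2 * q ^ 2 * (2 * q) = 4 * q ^ 3 := by ring
    omega
  have hsA : s (4 * q ^ 3 + 2 * q ^ 2 - 1) = 2 * m + 2 := by
    rw [hAeq, s_shift (2 * m + 1) _ _ (by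
      have : (1:ℕ) ≤ 2 ^ (2 * m + 1) := Nat.one_le_two_pow
      omega), s_pow, s_pow_sub_one]
    omega
  have hBeq : 8 * q ^ 3 * (2 * q - 1) + (2 * q + 1) =
      2 ^ (3 * (m + 1)) * (2 ^ (m + 1) - 1) + (2 ^ (m + 1) + 1) := by
    rw [e3, hq]
  have hsB : s (8 * q ^ 3 * (2 * q - 1) + (2 * q + 1)) = (m + 1) + 2 := by
    rw [hBeq, s_shift (3 * (m + 1)) _ _ (by rw [e3, hq]; omega),
      s_pow_sub_one, s_pow_add_one _ (by omega)]
  have hsC : s C = 3 * (m + 1) + 2 := by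
    rw [hcval, ← e41, s_shift _ _ _ hBlt, hsA, hsB]
    ring
  -- s b
  have hCN : C < 2 ^ N := by
    have hp : (2:ℕ) ^ (9 * (m + 1)) < 2 ^ N :=
      Nat.pow_lt_pow_right (by norm_num) hN
    rw [e9] at hp
    have hC1 : 32 * q ^ 4 * (4 * q ^ 3 + 2 * q ^ 2 - 1) ≤ 128 * q ^ 7 + 64 * q ^ 6 := by
      calc 32 * q ^ 4 * (4 * q ^ 3 + 2 * q ^ 2 - 1)
          ≤ 32 * q ^ 4 * (4 * q ^ 3 + 2 * q ^ 2) := Nat.mul_le_mul_left _ (by omega)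
        _ = 128 * q ^ 7 + 64 * q ^ 6 := by ring
    omega
  have hbval : b = 2 ^ N * C + C := by rw [hb]; ring
  have hsb : s b = 2 * (3 * (m + 1) + 2) := by
    rw [hbval, s_shift N C C hCN, hsC]; ring
  -- s (a * b)
  have hac : a * C = 512 * q ^ 9 + 1 := by
    rw [ha, hcval, e2, hq]
    zify [hq24, c3, c4]
    ring
  have h9lt : 2 ^ (9 * (m + 1)) + 1 < 2 ^ N := by
    have hp1 : (2:ℕ) ^ (9 * (m + 1) + 1) ≤ 2 ^ N :=
      Nat.pow_le_pow_right (by norm_num) (by omega)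
    have hp2 : (2:ℕ) ^ (9 * (m + 1) + 1) = 2 * 2 ^ (9 * (m + 1)) := by ring
    have hp3 : (1:ℕ) ≤ 2 ^ (9 * (m + 1)) := Nat.one_le_two_pow
    omega
  have hsab : s (a * b) = 4 := by
    have h1 : a * b = (2 ^ N + 1) * (a * C) := by rw [hb]; ring
    rw [h1, hac, ← e9,
      show (2 ^ N + 1) * (2 ^ (9 * (m + 1)) + 1) =
        2 ^ N * (2 ^ (9 * (m + 1)) + 1) + (2 ^ (9 * (m + 1)) + 1) by ring,
      s_shift N _ _ h9lt, s_pow_add_one _ (by omega)]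
  -- oddness
  have hodda : Odd a := by
    refine ⟨q * (2 * q - 1), ?_⟩
    rw [ha, e2, hq]
    zify [hq24, c4]
    ring
  have hoddb : Odd b := by
    rw [hb]
    refine Nat.odd_mul.mpr ⟨?_, ?_⟩
    · refine ⟨2 ^ (N - 1), ?_⟩
      have : (2:ℕ) ^ N = 2 * 2 ^ (N - 1) := by
        rw [← pow_succ']
        congr 1
        omega
      omega
    · refine ⟨16 * q ^ 4 * (4 * q ^ 3 + 2 * q ^ 2 - 1) + 4 * q ^ 3 * (2 * q - 1) + q, ?_⟩
      rw [hcval]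
      generalize (4 * q ^ 3 + 2 * q ^ 2 - 1) = X
      generalize (2 * q - 1) = Y
      ring
  exact ⟨hodda, hoddb, hsa, hsb, hsab⟩
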